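/- Let G = (V,E) be a finite simple graph with no isolated vertices. Let G* be the graph whose vertex set is the disjoint union V ⊔ E, where two vertices of V are adjacent in G* if and only if they are adjacent in G, each e ∈ E is adjacent exactly to its two endpoints in V, and no two elements of E are adjacent. Then the minimum size of a dominating set of G* equals the minimum size of a vertex cover of G. -/

import Mathlib

/-- The graph `G*` on vertex set `V ⊔ E`: two original vertices are adjacent iff they are
adjacent in `G`, an edge-vertex `e` is adjacent exactly to the two endpoints of `e`,
and no two edge-vertices are adjacent. -/
def Gstar {V : Type} (G : SimpleGraph V) : SimpleGraph (V ⊕ G.edgeSet) where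
  Adj a b :=
    match a, b with
    | Sum.inl u, Sum.inl v => G.Adj u v
    | Sum.inl u, Sum.inr e => u ∈ (e : Sym2 V)
    | Sum.inr e, Sum.inl u => u ∈ (e : Sym2 V)
    | Sum.inr _, Sum.inr _ => False
  symm := by
    constructor
    rintro (u | e) (v | f) h
    · exact h.symm
    · exact h
    · exact h
    · exact h.elim
  loopless := by
    constructor
    rintro (u | e) h
    · exact h.ne rfl
    · exact h

/-- For a finite simple graph `G` with no isolated vertices, the minimum
size of a dominating set of `G*` equals the minimum size of a vertex cover of `G`. -/
theorem stmt_6 {V : Type} [Fintype V] (G : SimpleGraph V)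
    (hiso : ∀ v : V, ∃ u, G.Adj u v) :
    sInf {k : ℕ | ∃ D : Finset (V ⊕ G.edgeSet),
        (∀ a, a ∈ D ∨ ∃ b ∈ D, (Gstar G).Adj b a) ∧ D.card = k} =
    sInf {k : ℕ | ∃ S : Finset V,
        (∀ u v, G.Adj u v → u ∈ S ∨ v ∈ S) ∧ S.card = k} := by
  classical
  set A := {k : ℕ | ∃ D : Finset (V ⊕ G.edgeSet),
      (∀ a, a ∈ D ∨ ∃ b ∈ D, (Gstar G).Adj b a) ∧ D.card = k}
  set B := {k : ℕ | ∃ S : Finset V,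
      (∀ u v, G.Adj u v → u ∈ S ∨ v ∈ S) ∧ S.card = k}
  have hBne : B.Nonempty := ⟨(Finset.univ : Finset V).card,
    Finset.univ, fun u v _ => Or.inl (Finset.mem_univ u), rfl⟩
  have hAne : A.Nonempty := by
    -- from any vertex cover we get a dominating set of the same card; use univ cover
    refine ⟨((Finset.univ : Finset V).image Sum.inl).card, _, ?_, rfl⟩
    intro a
    cases a with
    | inl v => exact Or.inl (Finset.mem_image_of_mem _ (Finset.mem_univ v))
    | inr e =>
      refine Or.inr ?_
      obtain ⟨e, he⟩ := e
      induction e using Sym2.ind with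
      | _ x y =>
        exact ⟨Sum.inl x, Finset.mem_image_of_mem _ (Finset.mem_univ x),
          Sym2.mem_mk_left x y⟩
  apply le_antisymm
  · -- sInf A ≤ sInf B : a vertex cover S gives dominating set image inl S
    refine le_csInf hBne ?_
    rintro k ⟨S, hS, rfl⟩
    have hmem : S.card ∈ A := by
      refine ⟨S.image Sum.inl, ?_, Finset.card_image_of_injective _ Sum.inl_injective⟩
      intro a
      cases a with
      | inl v =>
        by_cases hv : v ∈ S
        · exact Or.inl (Finset.mem_image_of_mem _ hv)
        · obtain ⟨u, hu⟩ := hiso v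
          have : u ∈ S := (hS u v hu).resolve_right hv
          exact Or.inr ⟨Sum.inl u, Finset.mem_image_of_mem _ this, hu⟩
      | inr e =>
        refine Or.inr ?_
        obtain ⟨e, he⟩ := e
        induction e using Sym2.ind with
        | _ x y =>
          have hadj : G.Adj x y := he
          rcases hS x y hadj with hx | hy
          · exact ⟨Sum.inl x, Finset.mem_image_of_mem _ hx, Sym2.mem_mk_left x y⟩
          · exact ⟨Sum.inl y, Finset.mem_image_of_mem _ hy, Sym2.mem_mk_right x y⟩
    exact Nat.sInf_le hmem
  · -- sInf B ≤ sInf A : from dominating set D, take f '' D with f collapsing edges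
    refine le_csInf hAne ?_
    rintro k ⟨D, hD, rfl⟩
    set f : V ⊕ G.edgeSet → V := fun a =>
      match a with
      | Sum.inl v => v
      | Sum.inr e => (Quot.out (e : Sym2 V)).1
    have hmem : (D.image f).card ∈ B := by
      refine ⟨D.image f, ?_, rfl⟩
      intro u v huv
      have he : (s(u, v) : Sym2 V) ∈ G.edgeSet := huv
      rcases hD (Sum.inr ⟨s(u, v), he⟩) with hin | ⟨b, hb, hadj⟩
      · -- the chosen endpoint f (inr e) is in the image and is an endpoint
        have hf : f (Sum.inr ⟨s(u, v), he⟩) ∈ (s(u, v) : Sym2 V) := by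
          show (Quot.out (s(u, v) : Sym2 V)).1 ∈ _
          exact Sym2.out_fst_mem _
        rcases Sym2.mem_iff.mp hf with h | h
        · exact Or.inl (h ▸ Finset.mem_image_of_mem f hin)
        · exact Or.inr (h ▸ Finset.mem_image_of_mem f hin)
      · cases b with
        | inl w =>
          have hw : w ∈ (s(u, v) : Sym2 V) := hadj
          rcases Sym2.mem_iff.mp hw with h | h
          · exact Or.inl (h ▸ Finset.mem_image_of_mem f hb)
          · exact Or.inr (h ▸ Finset.mem_image_of_mem f hb)
        | inr e' => exact hadj.elim
    calc sInf B ≤ (D.image f).card := Nat.sInf_le hmem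
      _ ≤ D.card := Finset.card_image_le
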